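/- Let S be a nonempty open subset of ℝ^d and let Q be a bounded positive kernel on S, i.e. Q(x,·) is a nonnegative Borel measure on S for each x, measurable in x, with sup_{x∈S} Q(x,S) < ∞. Assume that for every x ∈ S and every nonempty open subset O of S there exists q(x,O) ∈ ℕ such that Q^k(x,O) > 0 for all k ≥ q(x,O). Let m ≥ 1 and let φ : S → ℝ be a bounded continuous nonnegative function satisfying Q^m φ = φ pointwise (i.e. φ(x) = ∫_S φ(y) Q^m(x,dy) for all x ∈ S) and φ(x₀) > 0 for some x₀ ∈ S. Then φ(x) > 0 for every x ∈ S. -/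

import Mathlib

open MeasureTheory ProbabilityTheory
open scoped ENNReal

/-- Iterates of a kernel: `kernelIter Q k` is `Q^k`, with `Q^0` the identity
(deterministic) kernel and `Q^{k+1}(x, A) = ∫ Q^k(y, A) Q(x, dy)`. -/
noncomputable def kernelIter {α : Type*} [MeasurableSpace α] (Q : Kernel α α) : ℕ → Kernel α α
  | 0 => Kernel.deterministic id measurable_id
  | n + 1 => (kernelIter Q n) ∘ₖ Q

lemma kernelIter_zero {α : Type*} [MeasurableSpace α] (Q : Kernel α α) :
    kernelIter Q 0 = Kernel.id := rfl

lemma kernelIter_finite {α : Type*} [MeasurableSpace α] (Q : Kernel α α)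
    [IsFiniteKernel Q] (k : ℕ) : IsFiniteKernel (kernelIter Q k) := by
  induction k with
  | zero => rw [kernelIter_zero]; infer_instance
  | succ n ih => exact Kernel.IsFiniteKernel.comp (kernelIter Q n) Q

lemma kernelIter_add {α : Type*} [MeasurableSpace α] (Q : Kernel α α)
    [IsFiniteKernel Q] (a b : ℕ) :
    kernelIter Q (a + b) = (kernelIter Q a) ∘ₖ (kernelIter Q b) := by
  have := kernelIter_finite Q a
  induction b with
  | zero => simp [kernelIter_zero]
  | succ n ih =>
    show kernelIter Q (a + n) ∘ₖ Q = _
    rw [ih, Kernel.comp_assoc]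
    rfl

/-- Let `S` be a nonempty open subset of `ℝ^d` and `Q` a bounded positive
kernel on `S` such that for every `x` and every nonempty open `O ⊆ S`, `Q^k(x, O) > 0` for
all large `k`. If `φ` is a bounded continuous nonnegative function with `Q^m φ = φ`
pointwise (`m ≥ 1`) and `φ(x₀) > 0` for some `x₀`, then `φ > 0` everywhere on `S`. -/
theorem stmt_3 {d : ℕ} (S : Set (EuclideanSpace ℝ (Fin d)))
    (hSopen : IsOpen S) (hSne : S.Nonempty)
    (Q : Kernel S S) (hQbdd : IsFiniteKernel Q)
    (hirr : ∀ x : S, ∀ O : Set S, IsOpen O → O.Nonempty →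
      ∃ q : ℕ, ∀ k, q ≤ k → 0 < kernelIter Q k x O)
    (m : ℕ) (hm : 1 ≤ m)
    (φ : S → ℝ) (hφcont : Continuous φ) (hφbdd : ∃ M : ℝ, ∀ x, φ x ≤ M)
    (hφ0 : ∀ x, 0 ≤ φ x)
    (heig : ∀ x : S, φ x = ∫ y, φ y ∂(kernelIter Q m x))
    (x₀ : S) (hx₀ : 0 < φ x₀) :
    ∀ x : S, 0 < φ x := by
  have := fun k => kernelIter_finite Q k
  obtain ⟨M, hM⟩ := hφbdd
  set g : S → ℝ≥0∞ := fun y => ENNReal.ofReal (φ y) with hg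
  have hgmeas : Measurable g := (ENNReal.measurable_ofReal).comp hφcont.measurable
  -- one-step eigen in lintegral form
  have hlt : ∀ k (x : S), ∫⁻ y, g y ∂(kernelIter Q k x) ≠ ⊤ := by
    intro k x
    haveI := this k
    have hb : ∫⁻ y, g y ∂(kernelIter Q k x) ≤ ENNReal.ofReal M * (kernelIter Q k x) Set.univ := by
      rw [← lintegral_const]
      exact lintegral_mono fun y => ENNReal.ofReal_le_ofReal (hM y)
    exact ne_top_of_le_ne_top (ENNReal.mul_ne_top ENNReal.ofReal_ne_top
      (measure_ne_top _ _)) hb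
  have heig' : ∀ x : S, ∫⁻ y, g y ∂(kernelIter Q m x) = g x := by
    intro x
    have h1 : φ x = (∫⁻ y, g y ∂(kernelIter Q m x)).toReal := by
      rw [heig x, integral_eq_lintegral_of_nonneg_ae (Filter.Eventually.of_forall hφ0)
        hφcont.measurable.aestronglyMeasurable]
    rw [hg]
    simp only [h1, ENNReal.ofReal_toReal (hlt m x)]
    rfl
  -- iterated eigen
  have hiter : ∀ j (x : S), ∫⁻ y, g y ∂(kernelIter Q (j * m) x) = g x := by
    intro j
    induction j with
    | zero =>
      intro x
      rw [Nat.zero_mul, kernelIter_zero, Kernel.id_apply, lintegral_dirac' _ hgmeas]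
    | succ n ih =>
      intro x
      have : (n + 1) * m = n * m + m := by ring
      rw [this, kernelIter_add, Kernel.lintegral_comp _ _ _ hgmeas]
      simp_rw [ih]
      exact heig' x
  -- conclude
  intro x
  set O : Set S := φ ⁻¹' Set.Ioi 0 with hO
  obtain ⟨q, hq⟩ := hirr x O (hφcont.isOpen_preimage _ isOpen_Ioi) ⟨x₀, hx₀⟩
  have hqm : q ≤ q * m := Nat.le_mul_of_pos_right q hm
  have hpos : 0 < kernelIter Q (q * m) x O := hq _ hqm
  have hsupp : O ⊆ Function.support g := by
    intro y hy
    simp only [Function.mem_support, hg]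
    exact fun h => absurd (ENNReal.ofReal_eq_zero.mp h) (not_le.mpr hy)
  have hlpos : 0 < ∫⁻ y, g y ∂(kernelIter Q (q * m) x) := by
    rw [lintegral_pos_iff_support hgmeas]
    exact lt_of_lt_of_le hpos (measure_mono hsupp)
  rw [hiter q x] at hlpos
  exact ENNReal.ofReal_pos.mp hlpos
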